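/- If a trigonometric polynomial on ℝ^d (d > 1) vanishes on some sphere in ℝ^d, then it vanishes identically on ℝ^d. -/

import Mathlib

open Complex Real
open scoped RealInnerProductSpace

section Aux

lemma exists_sep' {E : Type*} [NormedAddCommGroup E] [InnerProductSpace ℝ E] :
    ∀ (W : Finset E), (∀ w ∈ W, w ≠ 0) → ∃ v : E, ∀ w ∈ W, ⟪w, v⟫ ≠ 0 := by
  classical
  intro W
  induction W using Finset.induction_on with
  | empty => exact fun _ => ⟨0, by simp⟩
  | @insert w₀ W hw₀W ih =>
    intro hW
    obtain ⟨v, hv⟩ := ih fun w hw => hW w (Finset.mem_insert_of_mem hw)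
    have hw₀ : w₀ ≠ 0 := hW w₀ (Finset.mem_insert_self _ _)
    set T : Finset ℝ :=
      insert (-⟪w₀, v⟫ / (‖w₀‖^2)) (W.image fun w => -⟪w, v⟫ / ⟪w, w₀⟫) with hT
    obtain ⟨ε, hε⟩ := Infinite.exists_notMem_finset T
    refine ⟨v + ε • w₀, ?_⟩
    intro w hw
    rcases Finset.mem_insert.1 hw with rfl | hwW
    · rw [inner_add_right, real_inner_smul_right, real_inner_self_eq_norm_sq]
      intro h
      apply hε
      rw [hT]
      have : ε = -⟪w, v⟫ / ‖w‖ ^ 2 := by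
        have hn : (‖w‖:ℝ)^2 ≠ 0 := by exact pow_ne_zero _ (norm_ne_zero_iff.2 hw₀)
        field_simp
        linarith
      rw [this]
      exact Finset.mem_insert_self _ _
    · rw [inner_add_right, real_inner_smul_right]
      by_cases hwz : ⟪w, w₀⟫ = 0
      · simpa [hwz] using hv w hwW
      · intro h
        apply hε
        rw [hT]
        refine Finset.mem_insert_of_mem (Finset.mem_image.2 ⟨w, hwW, ?_⟩)
        field_simp
        linarith

lemma exists_orth' {d : ℕ} (hd : 1 < d) (v : EuclideanSpace ℝ (Fin d)) :
    ∃ u : EuclideanSpace ℝ (Fin d), u ≠ 0 ∧ ⟪u, v⟫ = 0 := by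
  by_contra h
  push_neg at h
  have hinj : Function.Injective ((innerSL ℝ v).toLinearMap :
      EuclideanSpace ℝ (Fin d) →ₗ[ℝ] ℝ) := by
    rw [← LinearMap.ker_eq_bot, LinearMap.ker_eq_bot']
    intro u hu
    by_contra hu0
    exact h u hu0 (by rw [real_inner_comm]; simpa using hu)
  have := LinearMap.finrank_le_finrank_of_injective hinj
  simp [finrank_euclideanSpace] at this
  omega

lemma entire_zero_on_real' {g : ℂ → ℂ} (hg : Differentiable ℂ g)
    (h : ∀ t : ℝ, g t = 0) : ∀ z : ℂ, g z = 0 := by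
  have hA : AnalyticOnNhd ℂ g Set.univ := analyticOnNhd_univ_iff_differentiable.2 hg
  have hfreq : ∃ᶠ z in nhdsWithin (0:ℂ) {(0:ℂ)}ᶜ, g z = 0 := by
    have htend : Filter.Tendsto (fun n : ℕ => (((n:ℝ)+1)⁻¹ : ℂ))
        Filter.atTop (nhdsWithin (0:ℂ) {(0:ℂ)}ᶜ) := by
      rw [tendsto_nhdsWithin_iff]
      constructor
      · have : Filter.Tendsto (fun n : ℕ => ((n:ℝ)+1)⁻¹) Filter.atTop (nhds 0) :=
          tendsto_one_div_add_atTop_nhds_zero_nat.congr (by intro n; rw [one_div])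
        have := (Complex.continuous_ofReal.tendsto 0).comp this
        convert this using 2 with n
        all_goals simp [Function.comp]
      · filter_upwards with n
        simp only [Set.mem_compl_iff, Set.mem_singleton_iff]
        intro hc
        have : ((n:ℝ)+1)⁻¹ = (0:ℝ) := by exact_mod_cast hc
        have : (0:ℝ) < ((n:ℝ)+1)⁻¹ := by positivity
        simp_all
    refine htend.frequently (Filter.Frequently.of_forall fun n => ?_)
    have := h ((n:ℝ)+1)⁻¹
    simpa using this
  intro z
  exact hA.eqOn_zero_of_preconnected_of_frequently_eq_zero isPreconnected_univ
    (Set.mem_univ 0) hfreq (Set.mem_univ z)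

lemma tendsto_sinh_atTop' : Filter.Tendsto Real.sinh Filter.atTop Filter.atTop := by
  apply Filter.tendsto_atTop_mono' _ _ Filter.tendsto_id
  filter_upwards [Filter.eventually_ge_atTop (0:ℝ)] with x hx
  exact Real.self_le_sinh_iff.2 hx

lemma norm_combo_sq {E : Type*} [NormedAddCommGroup E] [InnerProductSpace ℝ E]
    {e f : E} (he : ‖e‖ = 1) (hf : ‖f‖ = 1) (hef : ⟪e, f⟫ = 0) (a b : ℝ) :
    ‖a • e + b • f‖ ^ 2 = a ^ 2 + b ^ 2 := by
  rw [norm_add_sq_real, real_inner_smul_left, real_inner_smul_right, hef,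
    norm_smul, norm_smul, he, hf]
  simp [mul_pow, sq_abs]

lemma inner_combo {E : Type*} [NormedAddCommGroup E] [InnerProductSpace ℝ E]
    (x y e f : E) (a b : ℝ) :
    ⟪x, y + a • e + b • f⟫ = ⟪x, y⟫ + a * ⟪x, e⟫ + b * ⟪x, f⟫ := by
  rw [inner_add_right, inner_add_right, real_inner_smul_right, real_inner_smul_right]

end Aux

/-- A trigonometric polynomial on ℝ^d, d > 1, vanishing on a sphere is identically zero. -/
theorem trig_poly_vanishing_on_sphere_eq_zero
    {d : ℕ} (hd : 1 < d)
    (B : Finset (EuclideanSpace ℝ (Fin d))) (c : EuclideanSpace ℝ (Fin d) → ℂ)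
    (center : EuclideanSpace ℝ (Fin d)) (r : ℝ) (hr : 0 < r)
    (hvanish : ∀ x : EuclideanSpace ℝ (Fin d), dist x center = r →
      ∑ b ∈ B, c b * Complex.exp (2 * Real.pi * Complex.I * (⟪b, x⟫ : ℝ)) = 0) :
    ∀ x : EuclideanSpace ℝ (Fin d),
      ∑ b ∈ B, c b * Complex.exp (2 * Real.pi * Complex.I * (⟪b, x⟫ : ℝ)) = 0 := by
  classical
  suffices hc : ∀ b ∈ B, c b = 0 by
    intro x
    exact Finset.sum_eq_zero fun b hb => by rw [hc b hb, zero_mul]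
  by_contra hcon
  push_neg at hcon
  obtain ⟨b₁, hb₁B, hb₁⟩ := hcon
  set S : Finset (EuclideanSpace ℝ (Fin d)) := B.filter fun b => c b ≠ 0 with hSdef
  have hSne : S.Nonempty := ⟨b₁, Finset.mem_filter.2 ⟨hb₁B, hb₁⟩⟩
  -- separating direction
  set e₁ : EuclideanSpace ℝ (Fin d) := EuclideanSpace.single ⟨0, by omega⟩ 1 with he₁def
  have he₁ : e₁ ≠ 0 := by
    intro h
    replace h := congrArg (fun w : EuclideanSpace ℝ (Fin d) => w (⟨0, by omega⟩ : Fin d)) h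
    rw [he₁def] at h
    simp [EuclideanSpace.single_apply] at h
  set W : Finset (EuclideanSpace ℝ (Fin d)) :=
    insert e₁ (((S ×ˢ S).filter fun p => p.1 ≠ p.2).image fun p => p.1 - p.2) with hWdef
  have hW : ∀ w ∈ W, w ≠ 0 := by
    intro w hw
    rcases Finset.mem_insert.1 hw with rfl | hw
    · exact he₁
    · obtain ⟨p, hp, rfl⟩ := Finset.mem_image.1 hw
      exact sub_ne_zero.2 (Finset.mem_filter.1 hp).2
  obtain ⟨v, hv⟩ := exists_sep' W hW
  have hv0 : v ≠ 0 := by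
    intro h
    exact hv e₁ (Finset.mem_insert_self _ _) (by simp [h])
  obtain ⟨u, hu0, huv⟩ := exists_orth' hd v
  set f : EuclideanSpace ℝ (Fin d) := (‖v‖⁻¹ : ℝ) • v with hfdef
  set e : EuclideanSpace ℝ (Fin d) := (‖u‖⁻¹ : ℝ) • u with hedef
  have hfnorm : ‖f‖ = 1 := norm_smul_inv_norm hv0
  have henorm : ‖e‖ = 1 := norm_smul_inv_norm hu0
  have hef : ⟪e, f⟫ = 0 := by
    rw [hedef, hfdef, real_inner_smul_left, real_inner_smul_right, huv]
    ring
  set α : EuclideanSpace ℝ (Fin d) → ℝ := fun b => ⟪b, e⟫ with hα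
  set β : EuclideanSpace ℝ (Fin d) → ℝ := fun b => ⟪b, f⟫ with hβ
  have hβinj : ∀ b ∈ S, ∀ b' ∈ S, b ≠ b' → β b ≠ β b' := by
    intro b hb b' hb' hne h
    have hmem : b - b' ∈ W := by
      refine Finset.mem_insert_of_mem (Finset.mem_image.2 ⟨(b, b'), ?_, rfl⟩)
      exact Finset.mem_filter.2 ⟨Finset.mem_product.2 ⟨hb, hb'⟩, hne⟩
    have h2 : ⟪b - b', f⟫ = 0 := by
      rw [inner_sub_left]
      simp only [hβ] at h
      linarith
    have h3 : ⟪b - b', v⟫ ≠ 0 := hv _ hmem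
    rw [hfdef, real_inner_smul_right] at h2
    rcases mul_eq_zero.1 h2 with h4 | h4
    · exact (inv_ne_zero (norm_ne_zero_iff.2 hv0)) h4
    · exact h3 h4
  -- the entire function
  set g : ℂ → ℂ := fun z => ∑ b ∈ B, c b * Complex.exp (2 * (Real.pi:ℂ) * Complex.I *
      (((⟪b, center⟫:ℝ):ℂ) + (r:ℂ) * (((α b:ℝ):ℂ) * Complex.cos z + ((β b:ℝ):ℂ) * Complex.sin z)))
      with hgdef
  have hgdiff : Differentiable ℂ g := by
    apply Differentiable.fun_sum
    intro b _
    apply Differentiable.const_mul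
    apply Differentiable.cexp
    apply Differentiable.const_mul
    apply Differentiable.add (differentiable_const _)
    apply Differentiable.const_mul
    exact (Complex.differentiable_cos.const_mul _).add (Complex.differentiable_sin.const_mul _)
  have hgreal : ∀ t : ℝ, g t = 0 := by
    intro t
    set x : EuclideanSpace ℝ (Fin d) :=
      center + (r * Real.cos t) • e + (r * Real.sin t) • f with hx
    have hdist : dist x center = r := by
      have h1 : x - center = (r * Real.cos t) • e + (r * Real.sin t) • f := by
        rw [hx]; abel
      rw [dist_eq_norm, h1]
      have h2 : ‖(r * Real.cos t) • e + (r * Real.sin t) • f‖^2 = r^2 := by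
        rw [norm_combo_sq henorm hfnorm hef]
        nlinarith [Real.sin_sq_add_cos_sq t]
      have h3 : (0:ℝ) ≤ ‖(r * Real.cos t) • e + (r * Real.sin t) • f‖ := norm_nonneg _
      nlinarith
    have hinner : ∀ b, (⟪b, x⟫:ℝ) = ⟪b, center⟫ + r * Real.cos t * α b + r * Real.sin t * β b := by
      intro b
      rw [hx, inner_combo]
    have := hvanish x hdist
    rw [hgdef]
    rw [← this]
    apply Finset.sum_congr rfl
    intro b _
    congr 1
    rw [hinner b]
    rw [← Complex.ofReal_cos, ← Complex.ofReal_sin]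
    push_cast
    ring
  have hgzero := entire_zero_on_real' hgdiff hgreal
  -- minimal frequency
  obtain ⟨b₀, hb₀S, hb₀min⟩ := S.exists_min_image β hSne
  have hc₀ : c b₀ ≠ 0 := (Finset.mem_filter.1 hb₀S).2
  -- key inequality
  have key : ∀ T : ℝ, ‖c b₀‖ ≤ ∑ b ∈ S.erase b₀,
      ‖c b‖ * Real.exp (-(2 * Real.pi * r * (β b - β b₀)) * Real.sinh T) := by
    intro T
    set F : EuclideanSpace ℝ (Fin d) → ℂ := fun b => c b * Complex.exp (2 * (Real.pi:ℂ) *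
      Complex.I * (((⟪b, center⟫:ℝ):ℂ) + (r:ℂ) * (((α b:ℝ):ℂ) * Complex.cos ((T:ℂ) * Complex.I)
        + ((β b:ℝ):ℂ) * Complex.sin ((T:ℂ) * Complex.I)))) with hF
    have hterm : ∀ b, F b = c b * (Complex.exp
          (((2 * Real.pi * (⟪b, center⟫ + r * (α b) * Real.cosh T) : ℝ) : ℂ) * Complex.I) *
        ((Real.exp (-(2 * Real.pi * r * (β b) * Real.sinh T)) : ℝ) : ℂ)) := by
      intro b
      rw [hF]
      simp only
      congr 1
      rw [Complex.cos_mul_I, Complex.sin_mul_I, ← Complex.ofReal_cosh, ← Complex.ofReal_sinh,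
        Complex.ofReal_exp, ← Complex.exp_add]
      congr 1
      have hI : (Complex.I) ^ 2 = -1 := Complex.I_sq
      push_cast
      linear_combination (2 * (Real.pi:ℂ) * r * (β b) * Complex.sinh (T:ℂ)) * hI
    have hFnorm : ∀ b, ‖F b‖ = ‖c b‖ * Real.exp (-(2 * Real.pi * r * (β b) * Real.sinh T)) := by
      intro b
      rw [hterm b, norm_mul, norm_mul,
        Complex.norm_exp_ofReal_mul_I, one_mul, Complex.norm_real, Real.norm_eq_abs,
        Real.abs_exp]
    have h0 : ∑ b ∈ B, F b = 0 := hgzero ((T:ℂ) * Complex.I)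
    have hS0 : ∑ b ∈ S, F b = 0 := by
      rw [hSdef, Finset.sum_filter_of_ne, h0]
      intro b _ hFb
      intro hcb
      exact hFb (by rw [hF]; simp only; rw [hcb, zero_mul])
    have hsplit : F b₀ = -∑ b ∈ S.erase b₀, F b := by
      have h := Finset.add_sum_erase S F hb₀S
      rw [hS0] at h
      exact eq_neg_of_add_eq_zero_left h
    have hnorm1 : ‖F b₀‖ ≤ ∑ b ∈ S.erase b₀, ‖F b‖ := by
      rw [hsplit, norm_neg]
      exact norm_sum_le _ _
    rw [hFnorm b₀] at hnorm1
    have hnorm2 : ‖c b₀‖ * Real.exp (-(2 * Real.pi * r * (β b₀) * Real.sinh T)) ≤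
        ∑ b ∈ S.erase b₀, ‖c b‖ * Real.exp (-(2 * Real.pi * r * (β b) * Real.sinh T)) := by
      refine le_trans hnorm1 (le_of_eq ?_)
      exact Finset.sum_congr rfl fun b _ => hFnorm b
    rw [← mul_le_mul_iff_of_pos_right (Real.exp_pos (-(2 * Real.pi * r * (β b₀)) * Real.sinh T))]
    calc ‖c b₀‖ * Real.exp (-(2 * Real.pi * r * β b₀) * Real.sinh T)
        = ‖c b₀‖ * Real.exp (-(2 * Real.pi * r * (β b₀) * Real.sinh T)) := by ring_nf
      _ ≤ ∑ b ∈ S.erase b₀, ‖c b‖ * Real.exp (-(2 * Real.pi * r * (β b) * Real.sinh T)) := hnorm2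
      _ = (∑ b ∈ S.erase b₀, ‖c b‖ * Real.exp (-(2 * Real.pi * r * (β b - β b₀)) * Real.sinh T)) *
          Real.exp (-(2 * Real.pi * r * (β b₀)) * Real.sinh T) := by
        rw [Finset.sum_mul]
        refine Finset.sum_congr rfl fun b _ => ?_
        have hx : Real.exp (-(2 * Real.pi * r * β b * Real.sinh T)) =
            Real.exp (-(2 * Real.pi * r * (β b - β b₀)) * Real.sinh T) *
            Real.exp (-(2 * Real.pi * r * (β b₀)) * Real.sinh T) := by
          rw [← Real.exp_add]; congr 1; ring
        rw [hx]; ring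
  have hlim : Filter.Tendsto (fun T : ℝ => ∑ b ∈ S.erase b₀,
      ‖c b‖ * Real.exp (-(2 * Real.pi * r * (β b - β b₀)) * Real.sinh T))
      Filter.atTop (nhds 0) := by
    have : (0:ℝ) = ∑ b ∈ S.erase b₀, (0:ℝ) := by simp
    rw [this]
    apply tendsto_finset_sum
    intro b hb
    have hbS : b ∈ S := Finset.mem_of_mem_erase hb
    have hbne : b ≠ b₀ := Finset.ne_of_mem_erase hb
    have hβpos : 0 < β b - β b₀ := by
      have h1 := hb₀min b hbS
      have h2 := hβinj b hbS b₀ hb₀S hbne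
      cases' lt_or_eq_of_le h1 with h h
      · linarith
      · exact absurd h.symm h2
    have hk : 0 < 2 * Real.pi * r * (β b - β b₀) := by positivity
    have h1 : Filter.Tendsto (fun T : ℝ => -(2 * Real.pi * r * (β b - β b₀)) * Real.sinh T)
        Filter.atTop Filter.atBot := by
      apply Filter.Tendsto.const_mul_atTop_of_neg (by linarith : -(2 * Real.pi * r * (β b - β b₀)) < 0) tendsto_sinh_atTop'
    have h2 := Real.tendsto_exp_atBot.comp h1
    have := h2.const_mul (‖c b‖)
    simpa using this
  have hle : ‖c b₀‖ ≤ 0 := ge_of_tendsto hlim (Filter.Eventually.of_forall key)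
  exact hc₀ (norm_le_zero_iff.1 hle)
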